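/- The semigroup T(X,Y,Z) is regular if and only if one of the following holds: (i) |Y| = 1; (ii) X = Y and |Z| = 1; (iii) Z = Y = X. -/
import Mathlib


/-- T(X,Y,Z) is regular iff |Y| = 1, or (X = Y and |Z| = 1), or Z = Y = X. -/
theorem stmt_6 {X : Type*} [Nonempty X] (Y Z : Set X) (hZY : Z ⊆ Y)
    (hZ : Z.Nonempty) :
    (∀ α : X → X, α '' Y ⊆ Z → ∃ β : X → X, β '' Y ⊆ Z ∧ α ∘ β ∘ α = α) ↔
      ((∃ y, Y = {y}) ∨ (Y = Set.univ ∧ ∃ z, Z = {z}) ∨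
        (Z = Set.univ ∧ Y = Set.univ)) := by
  classical
  obtain ⟨z, hz⟩ := hZ
  have hzY : z ∈ Y := hZY hz
  constructor
  · intro hreg
    by_cases hY1 : ∃ y, Y = ({y} : Set X)
    · exact Or.inl hY1
    have hYu : Y = Set.univ := by
      by_contra hYu
      obtain ⟨a, ha⟩ : ∃ a, a ∉ Y := by
        by_contra h; push_neg at h
        exact hYu (Set.eq_univ_iff_forall.mpr h)
      obtain ⟨y₁, hy₁Y, hy₁z⟩ : ∃ y₁ ∈ Y, y₁ ≠ z := by
        by_contra h; push_neg at h
        exact hY1 ⟨z, Set.eq_singleton_iff_unique_mem.mpr ⟨hzY, h⟩⟩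
      set α : X → X := fun x => if x = a then y₁ else z with hα
      have hαT : α '' Y ⊆ Z := by
        rintro _ ⟨x, hx, rfl⟩
        have hxa : x ≠ a := fun h => ha (h ▸ hx)
        simp [hα, hxa, hz]
      obtain ⟨β, hβT, hcomp⟩ := hreg α hαT
      have h1 : α (β (α a)) = α a := congrFun hcomp a
      have hαa : α a = y₁ := by simp [hα]
      rw [hαa] at h1
      have hβy₁ : β y₁ ∈ Z := hβT ⟨y₁, hy₁Y, rfl⟩
      have hne : β y₁ ≠ a := fun h => ha (h ▸ hZY hβy₁)
      simp [hα, hne] at h1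
      exact hy₁z h1.symm
    by_cases hZ1 : ∃ w, Z = ({w} : Set X)
    · exact Or.inr (Or.inl ⟨hYu, hZ1⟩)
    refine Or.inr (Or.inr ⟨?_, hYu⟩)
    by_contra hZu
    obtain ⟨a, ha⟩ : ∃ a, a ∉ Z := by
      by_contra h; push_neg at h
      exact hZu (Set.eq_univ_iff_forall.mpr h)
    obtain ⟨z₁, hz₁Z, hz₁z⟩ : ∃ z₁ ∈ Z, z₁ ≠ z := by
      by_contra h; push_neg at h
      exact hZ1 ⟨z, Set.eq_singleton_iff_unique_mem.mpr ⟨hz, h⟩⟩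
    set α : X → X := fun x => if x = a then z₁ else z with hα
    have hαT : α '' Y ⊆ Z := by
      rintro _ ⟨x, _, rfl⟩
      by_cases h : x = a <;> simp [hα, h, hz, hz₁Z]
    obtain ⟨β, hβT, hcomp⟩ := hreg α hαT
    have h1 : α (β (α a)) = α a := congrFun hcomp a
    have hαa : α a = z₁ := by simp [hα]
    rw [hαa] at h1
    have hβz₁ : β z₁ ∈ Z := hβT ⟨z₁, hYu ▸ Set.mem_univ z₁, rfl⟩
    have hne : β z₁ ≠ a := fun h => ha (h ▸ hβz₁)
    simp [hα, hne] at h1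
    exact hz₁z h1.symm
  · rintro (⟨y, hY⟩ | ⟨hYu, w, hZw⟩ | ⟨hZu, hYu⟩) α hα
    · -- Y = {y}; then Z = {y}
      have hzy : z = y := by rw [hY] at hzY; exact hzY
      subst hzy
      have hαz : α z ∈ Z := hα ⟨z, hY ▸ rfl, rfl⟩
      have hZz : ∀ u ∈ Z, u = z := by
        intro u hu
        have := hZY hu
        rw [hY] at this
        exact this
      refine ⟨fun v => if v = z then z else
        (if h : ∃ x, α x = v then h.choose else z), ?_, ?_⟩
      · rintro _ ⟨x, hx, rfl⟩
        rw [hY] at hx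
        simp only [Set.mem_singleton_iff] at hx
        subst hx
        simpa using hz
      · funext x
        simp only [Function.comp_apply]
        by_cases hv : α x = z
        · rw [hv]
          simp only [if_pos rfl]
          exact hZz _ hαz
        · have hex : ∃ x', α x' = α x := ⟨x, rfl⟩
          simp only [if_neg hv, dif_pos hex]
          exact hex.choose_spec
    · -- Y = univ, Z = {w}
      refine ⟨fun _ => w, ?_, ?_⟩
      · rintro _ ⟨x, _, rfl⟩
        rw [hZw]; rfl
      · funext x
        have h1 : α x = w := by
          have := hα ⟨x, hYu ▸ Set.mem_univ x, rfl⟩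
          rwa [hZw, Set.mem_singleton_iff] at this
        have h2 : α w = w := by
          have := hα ⟨w, hYu ▸ Set.mem_univ w, rfl⟩
          rwa [hZw, Set.mem_singleton_iff] at this
        simp [Function.comp_apply, h1, h2]
    · -- Z = univ
      refine ⟨fun v => if h : ∃ x, α x = v then h.choose else Classical.arbitrary X,
        ?_, ?_⟩
      · intro _ _; rw [hZu]; trivial
      · funext x
        have hex : ∃ x', α x' = α x := ⟨x, rfl⟩
        simp only [Function.comp_apply, dif_pos hex]
        exact hex.choose_spec
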